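/- In the ring of p-typical Witt vectors W(ℤ/p²ℤ), the element p (i.e., p times the identity) equals [p] + V([(-1)^{p-1}]), i.e., its Witt components are (p, (-1)^{p-1}, 0, 0, …). -/

import Mathlib

open Finset

-- L1
lemma aux_L1 (p : ℕ) (hp : p.Prime) (a : ℤ) (m : ℕ) (hm : 1 ≤ m)
    (h : (p:ℤ)^m ∣ a - 1) : (p:ℤ)^(m+1) ∣ a^p - 1 := by
  have hgeom : (∑ k ∈ range p, a ^ k) * (a - 1) = a ^ p - 1 := geom_sum_mul a p
  have hpd : (p:ℤ) ∣ a - 1 := dvd_trans (dvd_pow_self _ (by omega)) h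
  have hS : (p:ℤ) ∣ ∑ k ∈ range p, a ^ k := by
    have h1 : (p:ℤ) ∣ ∑ k ∈ range p, (a ^ k - 1) := by
      refine Finset.dvd_sum fun k _ => dvd_trans hpd ?_
      simpa using sub_dvd_pow_sub_pow a 1 k
    have h2 : (∑ k ∈ range p, (a ^ k - 1)) = (∑ k ∈ range p, a ^ k) - p := by
      rw [Finset.sum_sub_distrib]; simp
    rw [h2] at h1
    have h3 := dvd_add h1 (dvd_refl (p:ℤ))
    simpa using h3
  calc (p:ℤ)^(m+1) = p^m * p := by ring
  _ ∣ (a-1) * ∑ k ∈ range p, a ^ k := mul_dvd_mul h hS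
  _ = a ^ p - 1 := by rw [mul_comm, hgeom]

-- L2
lemma aux_L2 (p : ℕ) (hp : p.Prime) (n : ℕ) (hn : 2 ≤ n) :
    (p:ℤ)^(n+1) ∣ (1 - (p:ℤ)^(p-1))^(p^(n-1)) - 1 := by
  rcases hp.eq_two_or_odd' with h2 | hodd
  · subst h2
    have he : Even (2^(n-1)) := (Nat.even_pow).mpr ⟨even_two, by omega⟩
    have h1 : ((1:ℤ) - (2:ℕ)^(2-1))^(2^(n-1)) = 1 := by
      norm_num
      exact he.neg_one_pow
    rw [h1]; simp
  · have key : ∀ k : ℕ, (p:ℤ)^(p-1+k) ∣ (1 - (p:ℤ)^(p-1))^(p^k) - 1 := by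
      intro k
      induction k with
      | zero => simp [dvd_neg.mpr (dvd_refl _)]
      | succ k ih =>
        have h3 := aux_L1 p hp ((1 - (p:ℤ)^(p-1))^(p^k)) (p-1+k) (by have := hp.two_le; omega) ih
        rw [← pow_mul, ← pow_succ] at h3
        exact h3
    have h4 := key (n-1)
    have hp3 : 3 ≤ p := by
      have := hp.two_le
      rcases hodd with ⟨k, hk⟩
      omega
    have hle : n + 1 ≤ p - 1 + (n - 1) := by omega
    exact dvd_trans (pow_dvd_pow _ hle) h4

lemma aux_two_pow (n : ℕ) (hn : 2 ≤ n) : n + 2 ≤ 2^n := by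
  induction n with
  | zero => omega
  | succ k ih =>
    rcases Nat.lt_or_ge k 2 with h | h
    · interval_cases k <;> simp_all <;> omega
    · have := ih h; rw [pow_succ]; omega

lemma aux_c0 (p : ℕ) (hp : p.Prime) (c : ℕ → ℤ)
    (H : ∀ n : ℕ, ∑ i ∈ range (n+1), (p:ℤ)^i * c i ^ p^(n-i) = p) :
    c 0 = p := by simpa using H 0

lemma aux_c1 (p : ℕ) (hp : p.Prime) (c : ℕ → ℤ)
    (H : ∀ n : ℕ, ∑ i ∈ range (n+1), (p:ℤ)^i * c i ^ p^(n-i) = p) :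
    c 1 = 1 - (p:ℤ)^(p-1) := by
  have hp0 : (p:ℤ) ≠ 0 := Nat.cast_ne_zero.mpr hp.pos.ne'
  have H1 := H 1
  rw [Finset.sum_range_succ, Finset.sum_range_one, aux_c0 p hp c H] at H1
  simp only [pow_zero, one_mul, pow_one, Nat.sub_self, Nat.sub_zero] at H1
  -- H1 : (p:ℤ)^p + p * c 1 = p
  have hpp : (p:ℤ)^p = p * (p:ℤ)^(p-1) := by
    rw [← pow_succ']
    congr 1
    have := hp.two_le; omega
  apply mul_left_cancel₀ hp0
  rw [mul_sub, mul_one, ← hpp]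
  linarith [H1]

lemma aux_cn (p : ℕ) (hp : p.Prime) (c : ℕ → ℤ)
    (H : ∀ n : ℕ, ∑ i ∈ range (n+1), (p:ℤ)^i * c i ^ p^(n-i) = p) :
    ∀ n, 2 ≤ n → (p:ℤ)^2 ∣ c n := by
  have hp0 : (p:ℤ) ≠ 0 := Nat.cast_ne_zero.mpr hp.pos.ne'
  intro n
  induction n using Nat.strong_induction_on with
  | _ n ih =>
  intro hn
  have Hn := H n
  rw [Finset.sum_range_succ, ← Finset.sum_range_add_sum_Ico _ (show 2 ≤ n from hn)] at Hn
  have hf0 : ∑ i ∈ range 2, (p:ℤ)^i * c i ^ p^(n-i)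
      = (p:ℤ)^(p^n) + p * (1 - (p:ℤ)^(p-1))^(p^(n-1)) := by
    rw [Finset.sum_range_succ, Finset.sum_range_one, aux_c0 p hp c H, aux_c1 p hp c H]
    simp [← pow_mul]
  have hdivS : (p:ℤ)^(n+2) ∣ ∑ i ∈ Finset.Ico 2 n, (p:ℤ)^i * c i ^ p^(n-i) := by
    refine Finset.dvd_sum ?_
    intro i hi
    rw [Finset.mem_Ico] at hi
    have hci := ih i (by omega) hi.1
    have h2 : (p:ℤ)^(2 * p^(n-i)) ∣ c i ^ p^(n-i) := by
      rw [pow_mul]; exact pow_dvd_pow_of_dvd hci _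
    have h3 : (p:ℤ)^(i + 2*p^(n-i)) ∣ (p:ℤ)^i * c i ^ p^(n-i) := by
      rw [pow_add]; exact mul_dvd_mul dvd_rfl h2
    refine dvd_trans (pow_dvd_pow _ ?_) h3
    have hj : n - i < p^(n-i) := Nat.lt_pow_self hp.one_lt
    omega
  have hdiv1 : (p:ℤ)^(n+2) ∣ (p:ℤ) - ((p:ℤ)^(p^n) + p * (1 - (p:ℤ)^(p-1))^(p^(n-1))) := by
    have hpn1 : 1 ≤ p^n := Nat.one_le_pow n p hp.pos
    have hepn : (p:ℤ)^(p^n) = p * (p:ℤ)^(p^n - 1) := by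
      conv_lhs => rw [show p^n = 1 + (p^n - 1) by omega, pow_add, pow_one]
    have hsplit : (p:ℤ) - ((p:ℤ)^(p^n) + p * (1 - (p:ℤ)^(p-1))^(p^(n-1)))
        = (p:ℤ) * ((1 - (1 - (p:ℤ)^(p-1))^(p^(n-1))) - (p:ℤ)^(p^n - 1)) := by
      rw [hepn]; ring
    rw [hsplit, show n + 2 = 1 + (n+1) by omega, pow_add, pow_one]
    refine mul_dvd_mul dvd_rfl (dvd_sub ?_ ?_)
    · have := aux_L2 p hp n hn
      simpa using (dvd_neg.mpr this)
    · refine pow_dvd_pow _ ?_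
      have h2n : n + 2 ≤ 2^n := aux_two_pow n hn
      have h2p : 2^n ≤ p^n := Nat.pow_le_pow_left hp.two_le n
      omega
  have hd : (p:ℤ)^(n+2) ∣ (p:ℤ)^n * c n := by
    have heq : (p:ℤ)^n * c n = (p:ℤ) - (∑ i ∈ range 2, (p:ℤ)^i * c i ^ p^(n-i))
        - ∑ i ∈ Finset.Ico 2 n, (p:ℤ)^i * c i ^ p^(n-i) := by
      have hfn : (p:ℤ)^n * c n ^ p^(n-n) = (p:ℤ)^n * c n := by simp
      rw [hfn] at Hn
      linarith [Hn]
    rw [heq, hf0]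
    exact dvd_sub hdiv1 hdivS
  have hd2 : (p:ℤ)^n * (p:ℤ)^2 ∣ (p:ℤ)^n * c n := by
    rw [← pow_add]; exact dvd_trans (pow_dvd_pow _ (by omega)) hd
  exact (mul_dvd_mul_iff_left (pow_ne_zero n hp0)).mp hd2
open Finset WittVector

section
variable (p : ℕ) [Fact p.Prime]

-- ghost components determine Witt vectors over ℤ
lemma aux_ghost_inj (a b : WittVector p ℤ)
    (h : ∀ n, ghostComponent n a = ghostComponent n b) : a = b := by
  apply map_injective (Int.castRingHom ℚ) Int.cast_injective
  haveI : Invertible (p:ℚ) :=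
    invertibleOfNonzero (by exact_mod_cast (Fact.out : p.Prime).pos.ne')
  apply (ghostMap.bijective_of_invertible p ℚ).1
  funext n
  have key : ∀ x : WittVector p ℤ,
      ghostComponent n (map (Int.castRingHom ℚ) x) = ((ghostComponent n x : ℤ) : ℚ) := by
    intro x
    simp only [ghostComponent_apply, aeval_wittPolynomial, map_coeff]
    push_cast
    rfl
  simp only [ghostMap_apply, key, h n]

noncomputable def auxY : WittVector p ℤ :=
  WittVector.mk p (fun n => if n = 0 then (p:ℤ) else if n = 1 then 1 - (p:ℤ)^(p-1) else 0)

lemma auxY_eq :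
    auxY p = teichmuller p (p:ℤ) + verschiebung (teichmuller p (1 - (p:ℤ)^(p-1))) := by
  apply aux_ghost_inj
  intro n
  rw [map_add, ghostComponent_teichmuller]
  cases n with
  | zero =>
    rw [ghostComponent_zero_verschiebung]
    rw [ghostComponent_apply, aeval_wittPolynomial]
    simp [auxY, WittVector.coeff_mk]
  | succ n =>
    rw [ghostComponent_verschiebung, ghostComponent_teichmuller]
    rw [ghostComponent_apply, aeval_wittPolynomial]
    have hsub : Finset.range 2 ⊆ Finset.range (n + 1 + 1) := by
      apply Finset.range_subset_range.mpr; omega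
    rw [← Finset.sum_subset hsub]
    · rw [Finset.sum_range_succ, Finset.sum_range_one]
      simp [auxY, WittVector.coeff_mk]
    · intro i hi hni
      rw [Finset.mem_range] at hi
      rw [Finset.mem_range] at hni
      have h1 : (auxY p).coeff i = 0 := by
        simp only [auxY, WittVector.coeff_mk]
        rw [if_neg (by omega), if_neg (by omega)]
      rw [h1, zero_pow (pow_ne_zero _ (Fact.out : p.Prime).pos.ne'), mul_zero]

lemma aux_fm : ((1 - (p:ℤ)^(p-1) : ℤ) : ZMod (p^2)) = (-1 : ZMod (p^2))^(p-1) := by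
  have hp := (Fact.out : p.Prime)
  rcases hp.eq_two_or_odd' with h2 | hodd
  · subst h2; decide
  · have hp3 : 3 ≤ p := by rcases hodd with ⟨k, hk⟩; have := hp.two_le; omega
    have heven : Even (p - 1) := by
      rcases hodd with ⟨k, hk⟩; exact ⟨k, by omega⟩
    rw [heven.neg_one_pow]
    have h0 : ((p:ℤ)^(p-1) : ZMod (p^2)) = 0 := by
      push_cast
      rw [show ((p:ZMod (p^2)))^(p-1) = (((p^(p-1) : ℕ)) : ZMod (p^2)) by push_cast; ring]
      rw [ZMod.natCast_eq_zero_iff]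
      exact pow_dvd_pow p (by omega)
    push_cast
    push_cast at h0
    rw [h0]
    ring

end

theorem stmt_3 (p : ℕ) [Fact p.Prime] :
    (p : WittVector p (ZMod (p ^ 2))) =
      WittVector.teichmuller p (p : ZMod (p ^ 2)) +
        WittVector.verschiebung (WittVector.teichmuller p ((-1 : ZMod (p ^ 2)) ^ (p - 1))) := by
  have hp := (Fact.out : p.Prime)
  set f := Int.castRingHom (ZMod (p^2)) with hf
  -- ghost equations for (p : 𝕎 ℤ)
  have Hg : ∀ n : ℕ, ∑ i ∈ range (n+1), (p:ℤ)^i * ((p : WittVector p ℤ).coeff i) ^ p^(n-i) = p := by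
    intro n
    have h1 : ghostComponent n (p : WittVector p ℤ) = (p : ℤ) := map_natCast _ p
    rw [ghostComponent_apply, aeval_wittPolynomial] at h1
    exact_mod_cast h1
  have h0 := aux_c0 p hp _ Hg
  have h1 := aux_c1 p hp _ Hg
  have hcn := aux_cn p hp _ Hg
  -- rewrite RHS via map
  have hrhs : WittVector.teichmuller p (p : ZMod (p ^ 2)) +
        WittVector.verschiebung (WittVector.teichmuller p ((-1 : ZMod (p ^ 2)) ^ (p - 1)))
      = WittVector.map f (auxY p) := by
    rw [auxY_eq, map_add, map_teichmuller, map_verschiebung, map_teichmuller]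
    have e1 : f (p:ℤ) = (p : ZMod (p^2)) := by simp [hf]
    have e2 : f (1 - (p:ℤ)^(p-1)) = (-1 : ZMod (p^2))^(p-1) := by
      simpa [hf] using aux_fm p
    rw [e1, e2]
  rw [hrhs, show (p : WittVector p (ZMod (p^2))) = WittVector.map f (p : WittVector p ℤ) from
    (map_natCast (WittVector.map f) p).symm]
  ext n
  rw [map_coeff, map_coeff]
  match n with
  | 0 => rw [h0]; simp [auxY, WittVector.coeff_mk]
  | 1 => rw [h1]; simp [auxY, WittVector.coeff_mk]
  | (k+2) =>
    have hz : (auxY p).coeff (k+2) = 0 := by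
      simp only [auxY, WittVector.coeff_mk]
      rw [if_neg (by omega), if_neg (by omega)]
    rw [hz]
    simp only [hf, map_zero, Int.coe_castRingHom]
    rw [ZMod.intCast_zmod_eq_zero_iff_dvd]
    have := hcn (k+2) (by omega)
    push_cast
    exact this
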